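/- For all nonnegative integers m and n, the coefficient identity \sum_{j} (-1)^{m+j} \binom{2n}{n-j}\binom{2m}{m+j} = \sum_{k} (-1)^k \binom{2m}{k} \binom{2n-2m}{m+n-2k} holds, obtained by equating coefficients of x^{m+n} in (1+x)^{2n}(1-x)^{2m} = (1-x^2)^{2m}(1+x)^{2n-2m}, assuming m \le n. -/

import Mathlib

/-- Binomial coefficient with an integer lower argument: `0` when the lower
argument is negative (and, via `Nat.choose`, `0` when it exceeds the top). -/
def ichoose (a : ℕ) (b : ℤ) : ℤ := if 0 ≤ b then (a.choose b.toNat : ℤ) else 0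

open Polynomial Finset

lemma coeff_one_sub_X_pow (N i : ℕ) :
    ((1 - X : ℤ[X]) ^ N).coeff i = (-1) ^ i * N.choose i := by
  have h : (1 - X : ℤ[X]) = (-1) * (X + C (-1)) := by
    simp [C_neg]; ring
  rw [h, mul_pow, show ((-1 : ℤ[X]) ^ N) = C ((-1) ^ N) by simp, coeff_C_mul,
    coeff_X_add_C_pow]
  by_cases hiN : i ≤ N
  · rw [← mul_assoc, ← pow_add, show N + (N - i) = i + 2 * (N - i) by omega,
      pow_add, pow_mul]
    norm_num
  · rw [Nat.choose_eq_zero_of_lt (by omega)]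
    simp

theorem coeff_identity (m n : ℕ) (hmn : m ≤ n) :
    (∑ j ∈ Finset.Icc (-(m : ℤ) - n) ((m : ℤ) + n),
        (-1) ^ ((m : ℤ) + j).natAbs * ichoose (2 * n) ((n : ℤ) - j) *
          ichoose (2 * m) ((m : ℤ) + j)) =
      ∑ k ∈ Finset.Icc (0 : ℤ) (2 * (m : ℤ)),
        (-1) ^ k.natAbs * ichoose (2 * m) k *
          ichoose (2 * n - 2 * m) ((m : ℤ) + n - 2 * k) := by
  set P : ℤ[X] := (1 + X) ^ (2 * n) * (1 - X) ^ (2 * m) with hP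
  -- Step A : LHS = P.coeff (m+n)
  have hA : (∑ j ∈ Finset.Icc (-(m : ℤ) - n) ((m : ℤ) + n),
        (-1) ^ ((m : ℤ) + j).natAbs * ichoose (2 * n) ((n : ℤ) - j) *
          ichoose (2 * m) ((m : ℤ) + j)) = P.coeff (m + n) := by
    rw [hP, coeff_mul, Finset.Nat.sum_antidiagonal_eq_sum_range_succ_mk]
    rw [← Finset.sum_subset (Finset.Icc_subset_Icc (by omega) (by omega) :
        Finset.Icc (-(m : ℤ)) (n : ℤ) ⊆ Finset.Icc (-(m : ℤ) - n) ((m : ℤ) + n))]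
    · refine Finset.sum_nbij' (fun j => ((n : ℤ) - j).toNat) (fun i => (n : ℤ) - i)
        ?_ ?_ ?_ ?_ ?_
      · intro j hj
        simp only [Finset.mem_Icc] at hj
        simp only [Finset.mem_range]
        omega
      · intro i hi
        simp only [Finset.mem_range] at hi
        simp only [Finset.mem_Icc]
        omega
      · intro j hj
        simp only [Finset.mem_Icc] at hj
        omega
      · intro i hi
        simp only [Finset.mem_range] at hi
        omega
      · intro j hj
        simp only [Finset.mem_Icc] at hj
        rw [coeff_one_add_X_pow, coeff_one_sub_X_pow]
        have h1 : (0 : ℤ) ≤ (n : ℤ) - j := by omega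
        have h2 : (0 : ℤ) ≤ (m : ℤ) + j := by omega
        rw [ichoose, if_pos h1, ichoose, if_pos h2]
        have h3 : m + n - ((n : ℤ) - j).toNat = ((m : ℤ) + j).toNat := by omega
        have h4 : ((m : ℤ) + j).natAbs = ((m : ℤ) + j).toNat := by omega
        rw [h3, h4]
        ring
    · intro j hjb hjs
      simp only [Finset.mem_Icc] at hjb hjs
      rcases (by omega : j < -(m : ℤ) ∨ (n : ℤ) < j) with h | h
      · have h0 : ichoose (2 * m) ((m : ℤ) + j) = 0 := by rw [ichoose, if_neg (by omega)]
        rw [h0]; ring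
      · have h0 : ichoose (2 * n) ((n : ℤ) - j) = 0 := by rw [ichoose, if_neg (by omega)]
        rw [h0]; ring
  -- Step B : P = (1 - X^2)^(2m) * (1+X)^(2n-2m)
  have hP2 : P = (1 - X ^ 2 : ℤ[X]) ^ (2 * m) * (1 + X) ^ (2 * n - 2 * m) := by
    have h1 : (1 + X : ℤ[X]) ^ (2 * n) = (1 + X) ^ (2 * m) * (1 + X) ^ (2 * n - 2 * m) := by
      rw [← pow_add]
      congr 1
      omega
    calc P = (1 + X : ℤ[X]) ^ (2 * m) * (1 - X) ^ (2 * m) * (1 + X) ^ (2 * n - 2 * m) := by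
          rw [hP, h1]; ring
      _ = ((1 + X) * (1 - X) : ℤ[X]) ^ (2 * m) * (1 + X) ^ (2 * n - 2 * m) := by
          rw [mul_pow]
      _ = (1 - X ^ 2 : ℤ[X]) ^ (2 * m) * (1 + X) ^ (2 * n - 2 * m) := by ring_nf
  -- Step C : RHS = P.coeff (m+n)
  have hexp : P = ∑ k ∈ Finset.range (2 * m + 1),
      C ((-1 : ℤ) ^ k * (2 * m).choose k) * ((1 + X) ^ (2 * n - 2 * m) * X ^ (2 * k)) := by
    rw [hP2, show (1 - X ^ 2 : ℤ[X]) = -(X ^ 2) + 1 by ring, add_pow, Finset.sum_mul]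
    refine Finset.sum_congr rfl fun k hk => ?_
    rw [neg_pow, ← pow_mul, C_mul, map_pow, map_neg, map_one, C_eq_natCast]
    ring
  have hB : P.coeff (m + n) = ∑ k ∈ Finset.range (2 * m + 1),
      (-1 : ℤ) ^ k * (2 * m).choose k *
        (if 2 * k ≤ m + n then ((2 * n - 2 * m).choose (m + n - 2 * k) : ℤ) else 0) := by
    rw [hexp, finset_sum_coeff]
    refine Finset.sum_congr rfl fun k hk => ?_
    rw [coeff_C_mul, coeff_mul_X_pow', coeff_one_add_X_pow]
  rw [hA, hB]
  -- reindex RHS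
  refine Finset.sum_nbij' (fun k : ℕ => (k : ℤ)) (fun k : ℤ => k.toNat) ?_ ?_ ?_ ?_ ?_
  · intro k hk
    simp only [Finset.mem_range] at hk
    simp only [Finset.mem_Icc]
    omega
  · intro k hk
    simp only [Finset.mem_Icc] at hk
    simp only [Finset.mem_range]
    omega
  · intro k hk
    omega
  · intro k hk
    simp only [Finset.mem_Icc] at hk
    omega
  · intro k hk
    simp only [Finset.mem_range] at hk
    have hnat : ((k : ℤ)).natAbs = k := by omega
    have htn : ((k : ℤ)).toNat = k := by omega
    simp only [ichoose, hnat, htn]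
    rw [if_pos (by omega : (0:ℤ) ≤ (k:ℕ))]
    by_cases h : 2 * k ≤ m + n
    · rw [if_pos h, if_pos (by omega : (0:ℤ) ≤ (m : ℤ) + n - 2 * k)]
      have h2 : ((m : ℤ) + n - 2 * k).toNat = m + n - 2 * k := by omega
      rw [h2]
    · rw [if_neg h, if_neg (by omega : ¬ (0:ℤ) ≤ (m : ℤ) + n - 2 * k)]
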